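/- For every integer n ≥ 2, the centre of the Lie algebra u_n equals the one-dimensional subspace K∂_n. -/

import Mathlib

open MvPolynomial

noncomputable section


/-- If a derivation of `MvPolynomial σ K` maps every generator `X j`, `j ∈ s`, into the
subalgebra `supported K s` of polynomials supported on `s`, then it maps the whole of
`supported K s` into itself. -/
theorem Derivation.mem_supported_of_forall_mem
    {K : Type*} [CommRing K] {σ : Type*} (s : Set σ)
    (D : Derivation K (MvPolynomial σ K) (MvPolynomial σ K))
    (h : ∀ j ∈ s, D (X j) ∈ supported K s)
    {p : MvPolynomial σ K} (hp : p ∈ supported K s) : D p ∈ supported K s := by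
  rw [supported_eq_adjoin_X] at hp
  induction hp using Algebra.adjoin_induction with
  | mem x hx =>
    obtain ⟨j, hj, rfl⟩ := hx
    exact h j hj
  | algebraMap r =>
    rw [Derivation.map_algebraMap]
    exact zero_mem _
  | add x y hx hy ihx ihy =>
    rw [map_add]
    exact add_mem ihx ihy
  | mul x y hx hy ihx ihy =>
    rw [Derivation.leibniz, smul_eq_mul, smul_eq_mul]
    rw [← supported_eq_adjoin_X] at hx hy
    exact add_mem (mul_mem hx ihy) (mul_mem hy ihx)

/-- If a derivation of `MvPolynomial σ K` kills every generator `X j`, `j ∈ s`, then it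
kills the whole subalgebra `supported K s`. -/
theorem Derivation.eq_zero_of_forall_eq_zero
    {K : Type*} [CommRing K] {σ : Type*} (s : Set σ)
    (D : Derivation K (MvPolynomial σ K) (MvPolynomial σ K))
    (h : ∀ j ∈ s, D (X j) = 0)
    {p : MvPolynomial σ K} (hp : p ∈ supported K s) : D p = 0 := by
  rw [supported_eq_adjoin_X] at hp
  induction hp using Algebra.adjoin_induction with
  | mem x hx =>
    obtain ⟨j, hj, rfl⟩ := hx
    exact h j hj
  | algebraMap r =>
    rw [Derivation.map_algebraMap]
  | add x y hx hy ihx ihy =>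
    rw [map_add, ihx, ihy, add_zero]
  | mul x y hx hy ihx ihy =>
    rw [Derivation.leibniz, ihx, ihy, smul_zero, smul_zero, add_zero]

/-- The defining condition for the Lie algebra `u_n = K∂₁ ⊕ P₁∂₂ ⊕ ⋯ ⊕ P_{n-1}∂ₙ` of
triangular polynomial derivations of `P_n = K[x₁,…,xₙ]` (variables indexed by `Fin n`,
zero-based): a derivation `D` of `P_n` is triangular iff, for every `i`, the polynomial
`D (X i)` only involves the variables `X j` with `j < i` (so the coefficient of `∂_i`
lies in `P_{i-1}`, where `P₀ = K`). -/
def triSet (K : Type*) [Field K] (n : ℕ) :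
    Set (Derivation K (MvPolynomial (Fin n) K) (MvPolynomial (Fin n) K)) :=
  {D | ∀ i : Fin n, D (X i) ∈ supported K {j : Fin n | (j : ℕ) < (i : ℕ)}}

theorem supported_upward {K : Type*} [Field K] {n : ℕ}
    (p : MvPolynomial (Fin n) K) (s t : Set (Fin n)) (hst : s ⊆ t)
    (hp : p ∈ supported K s) : p ∈ supported K t :=
  supported_mono hst hp

theorem triSet_stable {K : Type*} [Field K] {n : ℕ}
    {D : Derivation K (MvPolynomial (Fin n) K) (MvPolynomial (Fin n) K)}
    (hD : D ∈ triSet K n) (i : Fin n) :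
    ∀ j ∈ {j' : Fin n | (j' : ℕ) < (i : ℕ)},
      D (X j) ∈ supported K {j' : Fin n | (j' : ℕ) < (i : ℕ)} := by
  intro j hj
  refine supported_upward _ {j' : Fin n | (j' : ℕ) < (j : ℕ)} _ ?_ (hD j)
  intro l hl
  have hl' : (l : ℕ) < (j : ℕ) := hl
  have hj' : (j : ℕ) < (i : ℕ) := hj
  exact lt_trans hl' hj'

theorem triSet_lie {K : Type*} [Field K] {n : ℕ}
    {a b : Derivation K (MvPolynomial (Fin n) K) (MvPolynomial (Fin n) K)}
    (ha : a ∈ triSet K n) (hb : b ∈ triSet K n) : ⁅a, b⁆ ∈ triSet K n := by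
  intro i
  rw [Derivation.commutator_apply]
  exact sub_mem
    (Derivation.mem_supported_of_forall_mem _ a (triSet_stable ha i) (hb i))
    (Derivation.mem_supported_of_forall_mem _ b (triSet_stable hb i) (ha i))

/-- The Lie algebra `u_n = K∂₁ ⊕ P₁∂₂ ⊕ ⋯ ⊕ P_{n-1}∂ₙ` of triangular polynomial
derivations, as a Lie subalgebra of the Lie algebra of all `K`-derivations of the
polynomial algebra `P_n = K[x₁,…,xₙ]`. -/
def triangular (K : Type*) [Field K] (n : ℕ) :
    LieSubalgebra K (Derivation K (MvPolynomial (Fin n) K) (MvPolynomial (Fin n) K)) where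
  carrier := triSet K n
  add_mem' := fun {a b} ha hb i => by
    rw [Derivation.add_apply]; exact add_mem (ha i) (hb i)
  zero_mem' := fun i => by
    rw [Derivation.zero_apply]; exact zero_mem _
  smul_mem' := fun c a ha i => by
    rw [Derivation.smul_apply]; exact Subalgebra.smul_mem _ (ha i) c
  lie_mem' := fun {a b} ha hb => triSet_lie ha hb

theorem mem_triangular_iff {K : Type*} [Field K] {n : ℕ}
    (D : Derivation K (MvPolynomial (Fin n) K) (MvPolynomial (Fin n) K)) :
    D ∈ triangular K n ↔
      ∀ i : Fin n, D (X i) ∈ supported K {j : Fin n | (j : ℕ) < (i : ℕ)} := Iff.rfl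

/-- The partial derivative `∂ᵢ` as an element of the Lie algebra `u_n`. -/
def pd (K : Type*) [Field K] (n : ℕ) (i : Fin n) : ↥(triangular K n) :=
  ⟨pderiv i, by
    intro j
    rcases eq_or_ne j i with rfl | h
    · rw [pderiv_X_self]
      exact one_mem _
    · rw [pderiv_X_of_ne h]
      exact zero_mem _⟩

theorem aux_coeff_pderiv {K : Type*} [CommRing K] {σ : Type*} [DecidableEq σ]
    (j : σ) (p : MvPolynomial σ K) (m : σ →₀ ℕ) :
    coeff m (pderiv j p) = ((m j + 1 : ℕ) : K) * coeff (m + Finsupp.single j 1) p := by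
  induction p using MvPolynomial.induction_on' with
  | monomial d a =>
    rw [pderiv_monomial, coeff_monomial, coeff_monomial]
    by_cases h : d = m + Finsupp.single j 1
    · subst h
      have h1 : m + Finsupp.single j 1 - Finsupp.single j 1 = m :=
        add_tsub_cancel_right m (Finsupp.single j 1)
      have h2 : (m + Finsupp.single j 1 : σ →₀ ℕ) j = m j + 1 := by simp
      rw [if_pos h1, if_pos rfl, h2]
      push_cast
      ring
    · rw [if_neg h]
      by_cases h3 : d j = 0
      · rw [mul_zero]
        split <;> simp [h3]
      · have hle : Finsupp.single j 1 ≤ d := by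
          rw [Finsupp.single_le_iff]; omega
        have : d - Finsupp.single j 1 ≠ m := by
          intro he
          exact h (by rw [← he, tsub_add_cancel_of_le hle])
        rw [if_neg this, mul_zero]
  | add p q hp hq =>
    simp [coeff_add, hp, hq, mul_add]

theorem aux_eq_C {K : Type*} [Field K] [CharZero K] {σ : Type*} [DecidableEq σ]
    (p : MvPolynomial σ K) (h : ∀ j, pderiv j p = 0) : p = C (coeff 0 p) := by
  ext m
  rcases eq_or_ne m 0 with rfl | hm
  · simp
  · rw [coeff_C, if_neg (Ne.symm hm)]
    obtain ⟨j, hj⟩ := Finsupp.ne_iff.mp hm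
    rw [Finsupp.coe_zero, Pi.zero_apply] at hj
    have hle : Finsupp.single j 1 ≤ m := by
      rw [Finsupp.single_le_iff]; omega
    have := aux_coeff_pderiv j p (m - Finsupp.single j 1)
    rw [h j, coeff_zero, tsub_add_cancel_of_le hle] at this
    have hc : ((((m - Finsupp.single j 1 : σ →₀ ℕ) j + 1 : ℕ)) : K) ≠ 0 := by
      exact Nat.cast_ne_zero.mpr (Nat.succ_ne_zero _)
    exact (mul_eq_zero.mp this.symm).resolve_left hc

set_option maxHeartbeats 1000000 in
/-- For every `n ≥ 2`, the centre of the Lie algebra `u_n` equals the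
one-dimensional subspace `K∂ₙ`. -/
theorem triangular_center_eq
    (K : Type*) [Field K] [CharZero K] (n : ℕ) (hn : 2 ≤ n) :
    ∀ z : ↥(triangular K n),
      z ∈ LieAlgebra.center K ↥(triangular K n) ↔
        ∃ c : K, z = c • pd K n ⟨n - 1, by omega⟩ := by
  intro z
  set last : Fin n := ⟨n - 1, by omega⟩ with hlast
  have hcen : z ∈ LieAlgebra.center K ↥(triangular K n) ↔ ∀ x, ⁅x, z⁆ = 0 :=
    LieModule.mem_maxTrivSubmodule K ↥(triangular K n) ↥(triangular K n) z
  rw [hcen]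
  constructor
  · intro hz
    set D : Derivation K (MvPolynomial (Fin n) K) (MvPolynomial (Fin n) K) := z.1 with hD
    -- Step 1: all partial derivatives of D (X i) vanish
    have step1 : ∀ k i : Fin n, pderiv k (D (X i)) = 0 := by
      intro k i
      have h := congrArg Subtype.val (hz (pd K n k))
      have h' : ⁅(pderiv k : Derivation K (MvPolynomial (Fin n) K) (MvPolynomial (Fin n) K)),
          D⁆ = 0 := h
      have h2 := congrFun (congrArg DFunLike.coe h') (X i)
      rw [Derivation.commutator_apply, Derivation.zero_apply, sub_eq_zero] at h2
      rw [h2]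
      rcases eq_or_ne i k with rfl | hik
      · rw [pderiv_X_self, Derivation.map_one_eq_zero]
      · rw [pderiv_X_of_ne hik, map_zero]
    -- Step 2: D (X i) is constant
    have step2 : ∀ i : Fin n, D (X i) = C (coeff 0 (D (X i))) := fun i =>
      aux_eq_C _ (fun j => step1 j i)
    -- Step 3: D (X i) = 0 for i < n - 1
    have step3 : ∀ i : Fin n, (i : ℕ) < n - 1 → D (X i) = 0 := by
      intro i hi
      set k : Fin n := ⟨(i : ℕ) + 1, by omega⟩ with hk
      have hik : (i : ℕ) < (k : ℕ) := by simp [hk]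
      set E : Derivation K (MvPolynomial (Fin n) K) (MvPolynomial (Fin n) K) :=
        mkDerivation K (Pi.single k (X i)) with hE
      have hEX : ∀ m : Fin n, E (X m) = Pi.single (M := fun _ => MvPolynomial (Fin n) K) k (X i) m := by
        intro m; rw [hE]; exact mkDerivation_X _ _ _
      have hEmem : E ∈ triangular K n := by
        intro m
        rw [hEX]
        rcases eq_or_ne m k with rfl | hmk
        · rw [Pi.single_eq_same]
          exact X_mem_supported.mpr hik
        · rw [Pi.single_eq_of_ne hmk]
          exact zero_mem _
      have h := congrArg Subtype.val (hz ⟨E, hEmem⟩)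
      have h' : ⁅E, D⁆ = 0 := h
      have h2 := congrFun (congrArg DFunLike.coe h') (X k)
      rw [Derivation.commutator_apply, Derivation.zero_apply, sub_eq_zero] at h2
      have hEXk : E (X k) = X i := by rw [hEX, Pi.single_eq_same]
      have hEconst : E (D (X k)) = 0 := by
        rw [step2 k]
        exact derivation_C _ _
      rw [hEXk, hEconst] at h2
      exact h2.symm
    refine ⟨coeff 0 (D (X last)), ?_⟩
    apply Subtype.ext
    show D = ((coeff 0 (D (X last))) • pd K n last).1
    apply derivation_ext
    intro i
    have : ((coeff 0 (D (X last))) • pd K n last).1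
        = (coeff 0 (D (X last))) • (pderiv last :
            Derivation K (MvPolynomial (Fin n) K) (MvPolynomial (Fin n) K)) := rfl
    rw [this, Derivation.smul_apply]
    by_cases hil : i = last
    · subst hil
      rw [pderiv_X_self, smul_eq_C_mul, mul_one]
      conv_lhs => rw [step2 last]
    · have : (i : ℕ) < n - 1 := by
        have := i.2
        have : (i : ℕ) ≠ n - 1 := fun h => hil (Fin.ext h)
        omega
      rw [pderiv_X_of_ne hil, step3 i this, smul_zero]
  · rintro ⟨c, rfl⟩
    intro x
    apply Subtype.ext
    show ⁅x.1, (c • pd K n last).1⁆ = 0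
    have hcd : (c • pd K n last).1
        = c • (pderiv last :
            Derivation K (MvPolynomial (Fin n) K) (MvPolynomial (Fin n) K)) := rfl
    rw [hcd]
    apply derivation_ext
    intro i
    rw [Derivation.commutator_apply, Derivation.zero_apply, Derivation.smul_apply,
      Derivation.smul_apply]
    have h1 : x.1 (c • pderiv last (X i)) = 0 := by
      rcases eq_or_ne i last with rfl | hil
      · rw [pderiv_X_self, smul_eq_C_mul, mul_one]
        exact derivation_C _ _
      · rw [pderiv_X_of_ne hil, smul_zero, map_zero]
    have h2 : pderiv last (x.1 (X i)) = 0 := by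
      refine Derivation.eq_zero_of_forall_eq_zero {j : Fin n | (j : ℕ) < (i : ℕ)}
        (pderiv last) ?_ (x.2 i)
      intro j hj
      have hj' : (j : ℕ) < (i : ℕ) := hj
      have : j ≠ last := by
        intro h
        have := i.2
        rw [h] at hj'
        simp only [hlast] at hj'
        omega
      exact pderiv_X_of_ne this
    rw [h1, h2, smul_zero, sub_zero]
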